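/- The Fourier coefficients of g(x,y) = x + y − 2xy − |x − y| on [0,1]² are: ĝ(0,0) = 1/6; ĝ(k,0) = −1/(2π²k²) for k ≠ 0; ĝ(0,k) = −1/(2π²k²) for k ≠ 0; ĝ(k,−k) = 1/(2π²k²) for k ≠ 0; and ĝ(k₁,k₂) = 0 for all other (k₁,k₂) with k₁,k₂ ≠ 0 and k₂ ≠ −k₁. -/

import Mathlib

open Real Complex

/-- The function `g(x,y) = x + y − 2xy − |x − y|`. -/
noncomputable def gfun (x y : ℝ) : ℝ := x + y - 2 * x * y - |x - y|

/-- Fourier coefficients of `g` on `[0,1]²`. -/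
noncomputable def ghat (k₁ k₂ : ℤ) : ℂ :=
  ∫ x in (0:ℝ)..1, ∫ y in (0:ℝ)..1,
    (gfun x y : ℂ) * Complex.exp (-2 * π * Complex.I * (k₁ * x + k₂ * y))

open intervalIntegral


lemma quad_exp (c p q r : ℂ) (hc : c ≠ 0) (s t : ℝ) :
    ∫ y in s..t, (p + q*y + r*(y:ℂ)^2) * Complex.exp (c*y)
      = (((p + q*t + r*(t:ℂ)^2)/c - (q + 2*r*t)/c^2 + 2*r/c^3) * Complex.exp (c*t))
        - (((p + q*s + r*(s:ℂ)^2)/c - (q + 2*r*s)/c^2 + 2*r/c^3) * Complex.exp (c*s)) := by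
  have key : ∀ y : ℝ, HasDerivAt
      (fun u : ℝ => ((p + q*u + r*(u:ℂ)^2)/c - (q + 2*r*u)/c^2 + 2*r/c^3) * Complex.exp (c*u))
      ((p + q*y + r*(y:ℂ)^2) * Complex.exp (c*y)) y := by
    intro y
    have h : HasDerivAt
        (fun z : ℂ => ((p + q*z + r*z^2)/c - (q + 2*r*z)/c^2 + 2*r/c^3) * Complex.exp (c*z))
        ((p + q*(y:ℂ) + r*(y:ℂ)^2) * Complex.exp (c*(y:ℂ))) (y:ℂ) := by
      have hz : HasDerivAt (fun z : ℂ => z) 1 (y:ℂ) := hasDerivAt_id _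
      have hz2 : HasDerivAt (fun z : ℂ => z^2) (2*(y:ℂ)) (y:ℂ) := by
        simpa using hasDerivAt_pow 2 (y:ℂ)
      have h1 : HasDerivAt (fun z : ℂ => (p + q*z + r*z^2)/c - (q + 2*r*z)/c^2 + 2*r/c^3)
          ((q + r*(2*(y:ℂ)))/c - (2*r)/c^2) (y:ℂ) := by
        have := ((((hasDerivAt_const (y:ℂ) p).add (hz.const_mul q)).add
            (hz2.const_mul r)).div_const c).sub
            (((hasDerivAt_const (y:ℂ) q).add (hz.const_mul (2*r))).div_const (c^2))
        have := this.add_const (2*r/c^3)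
        refine this.congr_deriv (Eq.symm ?_)
        ring
      have h2 : HasDerivAt (fun z : ℂ => Complex.exp (c*z)) (c * Complex.exp (c*(y:ℂ))) (y:ℂ) := by
        have := (Complex.hasDerivAt_exp (c*(y:ℂ))).comp (y:ℂ) (hz.const_mul c)
        exact this.congr_deriv (by ring)
      have := h1.mul h2
      refine this.congr_deriv (Eq.symm ?_)
      have hcd : c * c⁻¹ = 1 := mul_inv_cancel₀ hc
      simp only [div_eq_mul_inv, ← inv_pow]
      linear_combination (-(Complex.exp (c*(y:ℂ))) *
        ((p + q*(y:ℂ) + r*(y:ℂ)^2) - (q + 2*r*(y:ℂ))*c⁻¹ + 2*r*c⁻¹^2)) * hcd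
    exact h.comp_ofReal
  have hcont : Continuous fun y : ℝ => (p + q*y + r*(y:ℂ)^2) * Complex.exp (c*y) := by
    fun_prop
  exact integral_eq_sub_of_hasDerivAt (fun y _ => key y) (hcont.intervalIntegrable s t)

lemma quad_poly (p q r : ℂ) (s t : ℝ) :
    ∫ y in s..t, (p + q*y + r*(y:ℂ)^2)
      = (p*t + q*(t:ℂ)^2/2 + r*(t:ℂ)^3/3) - (p*s + q*(s:ℂ)^2/2 + r*(s:ℂ)^3/3) := by
  have key : ∀ y : ℝ, HasDerivAt
      (fun u : ℝ => (p*u + q*(u:ℂ)^2/2 + r*(u:ℂ)^3/3))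
      (p + q*y + r*(y:ℂ)^2) y := by
    intro y
    have h : HasDerivAt (fun z : ℂ => p*z + q*z^2/2 + r*z^3/3)
        (p + q*(y:ℂ) + r*(y:ℂ)^2) (y:ℂ) := by
      have hz : HasDerivAt (fun z : ℂ => z) 1 (y:ℂ) := hasDerivAt_id _
      have hz2 : HasDerivAt (fun z : ℂ => z^2) (2*(y:ℂ)) (y:ℂ) := by
        simpa using hasDerivAt_pow 2 (y:ℂ)
      have hz3 : HasDerivAt (fun z : ℂ => z^3) (3*(y:ℂ)^2) (y:ℂ) := by
        simpa using hasDerivAt_pow 3 (y:ℂ)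
      have := ((hz.const_mul p).add ((hz2.const_mul q).div_const 2)).add
        ((hz3.const_mul r).div_const 3)
      refine this.congr_deriv (Eq.symm ?_)
      ring
    exact h.comp_ofReal
  have hcont : Continuous fun y : ℝ => (p + q*y + r*(y:ℂ)^2) := by fun_prop
  exact integral_eq_sub_of_hasDerivAt (fun y _ => key y) (hcont.intervalIntegrable s t)

lemma gcont (x : ℝ) : Continuous fun y : ℝ => gfun x y := by
  unfold gfun; fun_prop

lemma inner_exp (b : ℂ) (hb : b ≠ 0) (hb1 : Complex.exp b = 1) {x : ℝ}
    (hx0 : 0 ≤ x) (hx1 : x ≤ 1) :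
    ∫ y in (0:ℝ)..1, (gfun x y : ℂ) * Complex.exp (b*y)
      = 2*(1 - Complex.exp (b*x))/b^2 := by
  have hcont : ∀ s t : ℝ, IntervalIntegrable
      (fun y : ℝ => (gfun x y : ℂ) * Complex.exp (b*y)) MeasureTheory.volume s t := by
    intro s t
    exact (((Complex.continuous_ofReal.comp (gcont x)).mul
      (Complex.continuous_exp.comp (by fun_prop)))).intervalIntegrable _ _
  rw [← intervalIntegral.integral_add_adjacent_intervals (hcont 0 x) (hcont x 1)]
  have e1 : ∫ y in (0:ℝ)..x, (gfun x y : ℂ) * Complex.exp (b*y)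
      = ∫ y in (0:ℝ)..x, ((0:ℂ) + ((2:ℂ)-2*x)*y + 0*(y:ℂ)^2) * Complex.exp (b*y) := by
    apply intervalIntegral.integral_congr
    intro y hy
    rw [Set.uIcc_of_le hx0] at hy
    have h : |x - y| = x - y := abs_of_nonneg (by linarith [hy.2])
    simp only [gfun, h]
    push_cast
    ring
  have e2 : ∫ y in x..(1:ℝ), (gfun x y : ℂ) * Complex.exp (b*y)
      = ∫ y in x..(1:ℝ), ((2*x:ℂ) + (-(2*x))*y + 0*(y:ℂ)^2) * Complex.exp (b*y) := by
    apply intervalIntegral.integral_congr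
    intro y hy
    rw [Set.uIcc_of_le hx1] at hy
    have h : |x - y| = -(x - y) := abs_of_nonpos (by linarith [hy.1])
    simp only [gfun, h]
    push_cast
    ring
  rw [e1, e2, quad_exp _ _ _ _ hb, quad_exp _ _ _ _ hb]
  rw [show b*((1:ℝ):ℂ) = b by simp, hb1]
  rw [show b*((0:ℝ):ℂ) = 0 by simp, Complex.exp_zero]
  simp only [div_eq_mul_inv, ← inv_pow]
  push_cast
  ring

lemma inner_zero {x : ℝ} (hx0 : 0 ≤ x) (hx1 : x ≤ 1) :
    ∫ y in (0:ℝ)..1, (gfun x y : ℂ) = (x:ℂ) - (x:ℂ)^2 := by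
  have hcont : ∀ s t : ℝ, IntervalIntegrable
      (fun y : ℝ => (gfun x y : ℂ)) MeasureTheory.volume s t := by
    intro s t
    exact (Complex.continuous_ofReal.comp (gcont x)).intervalIntegrable _ _
  rw [← intervalIntegral.integral_add_adjacent_intervals (hcont 0 x) (hcont x 1)]
  have e1 : ∫ y in (0:ℝ)..x, (gfun x y : ℂ)
      = ∫ y in (0:ℝ)..x, ((0:ℂ) + ((2:ℂ)-2*x)*y + 0*(y:ℂ)^2) := by
    apply intervalIntegral.integral_congr
    intro y hy
    rw [Set.uIcc_of_le hx0] at hy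
    have h : |x - y| = x - y := abs_of_nonneg (by linarith [hy.2])
    simp only [gfun, h]
    push_cast
    ring
  have e2 : ∫ y in x..(1:ℝ), (gfun x y : ℂ)
      = ∫ y in x..(1:ℝ), ((2*x:ℂ) + (-(2*x))*y + 0*(y:ℂ)^2) := by
    apply intervalIntegral.integral_congr
    intro y hy
    rw [Set.uIcc_of_le hx1] at hy
    have h : |x - y| = -(x - y) := abs_of_nonpos (by linarith [hy.1])
    simp only [gfun, h]
    push_cast
    ring
  rw [e1, e2, quad_poly, quad_poly]
  push_cast
  ring

lemma expa (k : ℤ) : Complex.exp (-2*(π:ℂ)*Complex.I*(k:ℂ)) = 1 := by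
  rw [show (-2*(π:ℂ)*Complex.I*(k:ℂ)) = ((-k : ℤ):ℂ) * (2*(π:ℂ)*Complex.I) by push_cast; ring]
  exact Complex.exp_int_mul_two_pi_mul_I (-k)

lemma ane (k : ℤ) (hk : k ≠ 0) : (-2*(π:ℂ)*Complex.I*(k:ℂ)) ≠ 0 := by
  apply mul_ne_zero (mul_ne_zero (mul_ne_zero (by norm_num) _) Complex.I_ne_zero)
  · exact_mod_cast hk
  · exact_mod_cast Real.pi_ne_zero

lemma ghat_eq (k₁ k₂ : ℤ) (hk₂ : k₂ ≠ 0) :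
    ghat k₁ k₂ = (2/(-2*(π:ℂ)*Complex.I*(k₂:ℂ))^2) *
      ((∫ x in (0:ℝ)..1, Complex.exp ((-2*(π:ℂ)*Complex.I*(k₁:ℂ))*x))
        - ∫ x in (0:ℝ)..1, Complex.exp (((-2*(π:ℂ)*Complex.I*(k₁:ℂ)) + (-2*(π:ℂ)*Complex.I*(k₂:ℂ)))*x)) := by
  set a : ℂ := -2*(π:ℂ)*Complex.I*(k₁:ℂ) with ha
  set b : ℂ := -2*(π:ℂ)*Complex.I*(k₂:ℂ) with hbdef
  have hb : b ≠ 0 := ane k₂ hk₂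
  have hb1 : Complex.exp b = 1 := expa k₂
  have step1 : ghat k₁ k₂ = ∫ x in (0:ℝ)..1,
      (2/b^2) * (Complex.exp (a*x) - Complex.exp ((a+b)*x)) := by
    unfold ghat
    apply intervalIntegral.integral_congr
    intro x hx
    rw [Set.uIcc_of_le (by norm_num : (0:ℝ) ≤ 1)] at hx
    have e1 : ∀ y : ℝ, (gfun x y : ℂ) * Complex.exp (-2 * ↑π * Complex.I * (↑k₁ * ↑x + ↑k₂ * ↑y))
        = Complex.exp (a*x) * ((gfun x y : ℂ) * Complex.exp (b*y)) := by
      intro y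
      rw [show (-2 * (π:ℂ) * Complex.I * (↑k₁ * ↑x + ↑k₂ * ↑y)) = a*x + b*y by
        rw [ha, hbdef]; ring, Complex.exp_add]
      ring
    simp only [e1]
    rw [intervalIntegral.integral_const_mul, inner_exp b hb hb1 hx.1 hx.2]
    rw [show (a+b)*(x:ℂ) = a*x + b*x by ring, Complex.exp_add]
    ring
  rw [step1]
  rw [intervalIntegral.integral_const_mul, intervalIntegral.integral_sub]
  · exact (Complex.continuous_exp.comp (by fun_prop)).intervalIntegrable _ _
  · exact (Complex.continuous_exp.comp (by fun_prop)).intervalIntegrable _ _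

lemma exp_int_integral (k : ℤ) (hk : k ≠ 0) :
    (∫ x in (0:ℝ)..1, Complex.exp ((-2*(π:ℂ)*Complex.I*(k:ℂ))*x)) = 0 := by
  rw [integral_exp_mul_complex (ane k hk)]
  simp only [Complex.ofReal_one, mul_one, Complex.ofReal_zero, mul_zero, Complex.exp_zero]
  rw [expa k]
  ring

lemma exp_zero_integral :
    (∫ x in (0:ℝ)..1, Complex.exp ((0:ℂ)*x)) = 1 := by
  simp

lemma sq_eval (k : ℤ) : (-2*(π:ℂ)*Complex.I*(k:ℂ))^2 = -(4*(π:ℂ)^2*(k:ℂ)^2) := by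
  rw [show (-2*(π:ℂ)*Complex.I*(k:ℂ))^2 = (2*(π:ℂ)*(k:ℂ))^2 * Complex.I^2 by ring,
    Complex.I_sq]
  ring

theorem fourier_coeffs_g :
    ghat 0 0 = 1 / 6 ∧
    (∀ k : ℤ, k ≠ 0 → ghat k 0 = -(1 / (2 * (π : ℂ) ^ 2 * (k : ℂ) ^ 2))) ∧
    (∀ k : ℤ, k ≠ 0 → ghat 0 k = -(1 / (2 * (π : ℂ) ^ 2 * (k : ℂ) ^ 2))) ∧
    (∀ k : ℤ, k ≠ 0 → ghat k (-k) = 1 / (2 * (π : ℂ) ^ 2 * (k : ℂ) ^ 2)) ∧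
    (∀ k₁ k₂ : ℤ, k₁ ≠ 0 → k₂ ≠ 0 → k₂ ≠ -k₁ → ghat k₁ k₂ = 0) := by
  have hpi : (π:ℂ) ≠ 0 := by exact_mod_cast Real.pi_ne_zero
  refine ⟨?_, ?_, ?_, ?_, ?_⟩
  · -- ghat 0 0 = 1/6
    unfold ghat
    have step1 : ∀ x ∈ Set.uIcc (0:ℝ) 1,
        (∫ y in (0:ℝ)..1, (gfun x y : ℂ) *
          Complex.exp (-2 * ↑π * Complex.I * (((0:ℤ):ℂ) * ↑x + ((0:ℤ):ℂ) * ↑y)))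
        = ((0:ℂ) + 1*(x:ℂ) + (-1)*(x:ℂ)^2) := by
      intro x hx
      rw [Set.uIcc_of_le (by norm_num : (0:ℝ) ≤ 1)] at hx
      have : ∀ y : ℝ, (gfun x y : ℂ) *
          Complex.exp (-2 * ↑π * Complex.I * (((0:ℤ):ℂ) * ↑x + ((0:ℤ):ℂ) * ↑y))
          = (gfun x y : ℂ) := by
        intro y; norm_num
      simp only [this]
      rw [inner_zero hx.1 hx.2]; ring
    rw [intervalIntegral.integral_congr step1, quad_poly]
    norm_num
  · -- ghat k 0
    intro k hk
    set a : ℂ := -2*(π:ℂ)*Complex.I*(k:ℂ) with hadef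
    have ha : a ≠ 0 := ane k hk
    unfold ghat
    have step1 : ∀ x ∈ Set.uIcc (0:ℝ) 1,
        (∫ y in (0:ℝ)..1, (gfun x y : ℂ) *
          Complex.exp (-2 * ↑π * Complex.I * (((k:ℤ):ℂ) * ↑x + ((0:ℤ):ℂ) * ↑y)))
        = ((0:ℂ) + 1*(x:ℂ) + (-1)*(x:ℂ)^2) * Complex.exp (a*x) := by
      intro x hx
      rw [Set.uIcc_of_le (by norm_num : (0:ℝ) ≤ 1)] at hx
      have : ∀ y : ℝ, (gfun x y : ℂ) *
          Complex.exp (-2 * ↑π * Complex.I * (((k:ℤ):ℂ) * ↑x + ((0:ℤ):ℂ) * ↑y))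
          = (gfun x y : ℂ) * Complex.exp (a*x) := by
        intro y
        rw [show (-2 * (π:ℂ) * Complex.I * (((k:ℤ):ℂ) * ↑x + ((0:ℤ):ℂ) * ↑y)) = a*x by
          push_cast; ring]
      simp only [this]
      rw [intervalIntegral.integral_mul_const, inner_zero hx.1 hx.2]
      ring
    rw [intervalIntegral.integral_congr step1, quad_exp _ _ _ _ ha]
    rw [show a*((1:ℝ):ℂ) = a by simp, expa k, show a*((0:ℝ):ℂ) = 0 by simp,
      Complex.exp_zero]
    have hsq : a^2 = -(4*(π:ℂ)^2*(k:ℂ)^2) := sq_eval k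
    have hk' : (k:ℂ) ≠ 0 := by exact_mod_cast hk
    have goal_eq : (((0:ℂ) + 1*((1:ℝ):ℂ) + (-1)*((1:ℝ):ℂ)^2)/a - ((1:ℂ) + 2*(-1)*((1:ℝ):ℂ))/a^2 + 2*(-1)/a^3) * 1
        - (((0:ℂ) + 1*((0:ℝ):ℂ) + (-1)*((0:ℝ):ℂ)^2)/a - ((1:ℂ) + 2*(-1)*((0:ℝ):ℂ))/a^2 + 2*(-1)/a^3) * 1
        = 2/a^2 := by push_cast; ring
    rw [goal_eq, hsq]
    field_simp
    ring
  · -- ghat 0 k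
    intro k hk
    rw [ghat_eq 0 k hk]
    push_cast [Int.cast_zero]
    rw [show (-2*(π:ℂ)*Complex.I*(0:ℂ)) = 0 by ring]
    rw [exp_zero_integral]
    rw [show ((0:ℂ) + -2*(π:ℂ)*Complex.I*(k:ℂ)) = -2*(π:ℂ)*Complex.I*(k:ℂ) by ring]
    rw [exp_int_integral k hk, sq_eval k]
    have hk' : (k:ℂ) ≠ 0 := by exact_mod_cast hk
    field_simp
    ring
  · -- ghat k (-k)
    intro k hk
    rw [ghat_eq k (-k) (by simpa using hk)]
    rw [show ((-2*(π:ℂ)*Complex.I*(k:ℂ)) + (-2*(π:ℂ)*Complex.I*(((-k:ℤ)):ℂ))) = 0 by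
      push_cast; ring]
    rw [exp_zero_integral, exp_int_integral k hk, sq_eval (-k)]
    have hk' : (k:ℂ) ≠ 0 := by exact_mod_cast hk
    push_cast
    field_simp
    ring
  · -- generic
    intro k₁ k₂ hk₁ hk₂ hne
    rw [ghat_eq k₁ k₂ hk₂]
    rw [exp_int_integral k₁ hk₁]
    rw [show ((-2*(π:ℂ)*Complex.I*(k₁:ℂ)) + (-2*(π:ℂ)*Complex.I*(k₂:ℂ)))
        = -2*(π:ℂ)*Complex.I*(((k₁+k₂:ℤ)):ℂ) by push_cast; ring]
    rw [exp_int_integral (k₁+k₂) (by omega)]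
    ring
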